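/- For any μ₁, μ₂ ∈ ℝ^d and σ > 0, the total variation distance between the Gaussian measure with mean μ₁ and covariance σ² Id and the Gaussian measure with mean μ₂ and covariance σ² Id equals 1 − 2Φ(−‖μ₁ − μ₂‖/(2σ)). -/

import Mathlib

open MeasureTheory

/-- The Gaussian measure on `ℝ^d` with mean `μ` and covariance matrix `σ2 • Id`. -/
noncomputable def gaussianE (d : ℕ) (μ : EuclideanSpace ℝ (Fin d)) (σ2 : ℝ) :
    Measure (EuclideanSpace ℝ (Fin d)) :=
  volume.withDensity fun x =>
    ENNReal.ofReal ((2 * Real.pi * σ2) ^ (-(d : ℝ) / 2) * Real.exp (-‖x - μ‖ ^ 2 / (2 * σ2)))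

/-- The total variation distance between two measures. -/
noncomputable def tvDist {E : Type*} [MeasurableSpace E] (μ ν : Measure E) : ℝ :=
  ⨆ A : {A : Set E // MeasurableSet A}, |(μ A.1).toReal - (ν A.1).toReal|

/-- The cumulative distribution function of the standard normal distribution. -/
noncomputable def stdGaussianCDF (t : ℝ) : ℝ :=
  ((ProbabilityTheory.gaussianReal 0 1) (Set.Iic t)).toReal

section Aux

open ProbabilityTheory Real Set

lemma stdGaussian_noAtoms : NoAtoms (gaussianReal 0 1) :=
  ⟨fun _ => (gaussianReal_absolutelyContinuous 0 one_ne_zero) (Real.volume_singleton)⟩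

lemma stdGaussian_Ici_symm (c : ℝ) :
    gaussianReal 0 1 (Ici c) = gaussianReal 0 1 (Iic (-c)) := by
  have hmap := gaussianReal_map_const_mul (μ := 0) (v := 1) (-1 : ℝ)
  have h1 : NNReal.mk ((-1:ℝ)^2) (sq_nonneg _) * 1 = 1 := by
    ext; norm_num
  rw [mul_zero, h1] at hmap
  conv_lhs => rw [← hmap]
  rw [Measure.map_apply (by fun_prop) measurableSet_Ici]
  congr 1
  ext x
  simp only [mem_preimage, mem_Ici, mem_Iic]
  constructor <;> intro h <;> linarith

lemma stdGaussian_Ici (c : ℝ) :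
    ((gaussianReal 0 1) (Ici c)).toReal = 1 - stdGaussianCDF c := by
  haveI : NullSingletonClass (gaussianReal 0 1) := stdGaussian_noAtoms
  have h1 : gaussianReal 0 1 (Iic c) + gaussianReal 0 1 (Ioi c) = 1 := by
    rw [← measure_union (Iic_disjoint_Ioi le_rfl) measurableSet_Ioi, Iic_union_Ioi,
      measure_univ]
  have h2 : gaussianReal 0 1 (Ioi c) = gaussianReal 0 1 (Ici c) :=
    measure_congr (Ioi_ae_eq_Ici (μ := gaussianReal 0 1))
  rw [h2] at h1
  have := congrArg ENNReal.toReal h1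
  rw [ENNReal.toReal_add (measure_ne_top _ _) (measure_ne_top _ _)] at this
  simp only [ENNReal.toReal_one] at this
  rw [stdGaussianCDF]
  linarith

lemma stdGaussianCDF_zero : stdGaussianCDF 0 = 1/2 := by
  have h1 := stdGaussian_Ici 0
  have h2 : ((gaussianReal 0 1) (Ici (0:ℝ))).toReal = stdGaussianCDF 0 := by
    rw [stdGaussian_Ici_symm, neg_zero, stdGaussianCDF]
  linarith

lemma gaussianReal_Ici_eq (σ : ℝ) (hσ : 0 < σ) (a t : ℝ) :
    gaussianReal a ⟨σ^2, sq_nonneg σ⟩ (Ici t) = gaussianReal 0 1 (Ici ((t - a)/σ)) := by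
  have hmul := gaussianReal_map_const_mul (μ := 0) (v := 1) σ
  have h1 : NNReal.mk (σ^2) (sq_nonneg _) * 1 = ⟨σ^2, sq_nonneg σ⟩ := by ext; norm_num; rfl
  rw [mul_zero, h1] at hmul
  have hadd := gaussianReal_map_add_const (μ := 0) (v := ⟨σ^2, sq_nonneg σ⟩) a
  rw [zero_add] at hadd
  rw [← hadd, ← hmul, Measure.map_apply (by fun_prop) measurableSet_Ici,
    Measure.map_apply (by fun_prop) ((by fun_prop : Measurable fun x : ℝ => x + a) measurableSet_Ici)]
  congr 1
  ext x
  simp only [mem_preimage, mem_Ici]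
  rw [div_le_iff₀ hσ]
  constructor <;> intro h <;> nlinarith

/-- The density of `gaussianE`, as a real-valued function. -/
noncomputable def gDens (d : ℕ) (ν : EuclideanSpace ℝ (Fin d)) (σ2 : ℝ)
    (x : EuclideanSpace ℝ (Fin d)) : ℝ :=
  (2 * Real.pi * σ2) ^ (-(d : ℝ) / 2) * Real.exp (-‖x - ν‖ ^ 2 / (2 * σ2))

lemma gaussianE_eq_withDensity (d : ℕ) (ν : EuclideanSpace ℝ (Fin d)) (σ2 : ℝ) :
    gaussianE d ν σ2 = volume.withDensity fun x => ENNReal.ofReal (gDens d ν σ2 x) := rfl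

lemma gDens_nonneg {d : ℕ} {ν : EuclideanSpace ℝ (Fin d)} {σ2 : ℝ} (hσ2 : 0 ≤ σ2) (x) :
    0 ≤ gDens d ν σ2 x :=
  mul_nonneg (Real.rpow_nonneg (by positivity) _) (Real.exp_nonneg _)

lemma prod_pdf_eq {d : ℕ} (σ : ℝ) (hσ : 0 < σ) (ν x : EuclideanSpace ℝ (Fin d)) :
    ∏ i, gaussianPDFReal (ν i) ⟨σ^2, sq_nonneg σ⟩ (x i) = gDens d ν (σ^2) x := by
  have hc : (0:ℝ) < 2*Real.pi*σ^2 := by positivity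
  have hnorm : ‖x - ν‖^2 = ∑ i, (x i - ν i)^2 := by
    rw [EuclideanSpace.norm_eq, Real.sq_sqrt (Finset.sum_nonneg fun i _ => sq_nonneg _)]
    simp [sq_abs]
  have hconst : ((√(2*Real.pi*σ^2))⁻¹)^d = (2 * Real.pi * σ^2) ^ (-(d:ℝ)/2) := by
    rw [Real.sqrt_eq_rpow, ← Real.rpow_neg_one ((2*Real.pi*σ^2) ^ ((1:ℝ)/2)),
      ← Real.rpow_mul hc.le, ← Real.rpow_natCast ((2*Real.pi*σ^2) ^ ((1:ℝ)/2 * -1)) d,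
      ← Real.rpow_mul hc.le]
    congr 1
    ring
  simp only [gaussianPDFReal, NNReal.coe_mk, gDens]
  dsimp only [NNReal.toReal]
  rw [Finset.prod_mul_distrib, Finset.prod_const, Finset.card_univ, Fintype.card_fin,
    ← Real.exp_sum, hconst, hnorm]
  congr 1
  rw [← Finset.sum_div, ← Finset.sum_neg_distrib]

lemma gDens_comp_symm {d : ℕ} (σ : ℝ) (hσ : 0 < σ) (ν : EuclideanSpace ℝ (Fin d))
    (b : OrthonormalBasis (Fin d) ℝ (EuclideanSpace ℝ (Fin d))) (y : Fin d → ℝ) :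
    gDens d ν (σ^2) ((b.measurableEquiv.trans
        ((MeasurableEquiv.toLp 2 (Fin d → ℝ)).symm)).symm y)
      = ∏ i, gaussianPDFReal ((b.repr ν) i) ⟨σ^2, sq_nonneg σ⟩ (y i) := by
  set e := (MeasurableEquiv.toLp 2 (Fin d → ℝ)).symm
  set φ := b.measurableEquiv.trans e
  have hz : φ.symm y = b.repr.symm (e.symm y) := rfl
  have hsub : φ.symm y - ν = b.repr.symm (e.symm y - b.repr ν) := by
    rw [hz, map_sub, b.repr.symm_apply_apply]
  have hnn : ‖φ.symm y - ν‖ = ‖e.symm y - b.repr ν‖ := by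
    rw [hsub, b.repr.symm.norm_map]
  have hpp := prod_pdf_eq σ hσ (b.repr ν) (e.symm y)
  simp only [gDens, hnn]
  exact hpp.symm

lemma gDens_integrable {d : ℕ} (σ : ℝ) (hσ : 0 < σ) (ν : EuclideanSpace ℝ (Fin d)) :
    Integrable (gDens d ν (σ^2)) := by
  set b : OrthonormalBasis (Fin d) ℝ (EuclideanSpace ℝ (Fin d)) :=
    EuclideanSpace.basisFun (Fin d) ℝ
  set e := (MeasurableEquiv.toLp 2 (Fin d → ℝ)).symm
  set φ := b.measurableEquiv.trans e with hφdef
  have hφ : MeasurePreserving φ volume volume :=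
    (EuclideanSpace.volume_preserving_symm_measurableEquiv_toLp (Fin d)).comp
      b.measurePreserving_measurableEquiv
  have hprodInt : Integrable
      (fun y : Fin d → ℝ => ∏ i, gaussianPDFReal ((b.repr ν) i) ⟨σ^2, sq_nonneg σ⟩ (y i)) :=
    Integrable.fintype_prod (𝕜 := ℝ) fun _ => integrable_gaussianPDFReal _ _
  refine ((hφ.symm φ).integrable_comp_emb φ.symm.measurableEmbedding).mp ?_
  have : gDens d ν (σ^2) ∘ φ.symm
      = fun y => ∏ i, gaussianPDFReal ((b.repr ν) i) ⟨σ^2, sq_nonneg σ⟩ (y i) :=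
    funext fun y => gDens_comp_symm σ hσ ν b y
  rw [this]; exact hprodInt

lemma integral_gDens {d : ℕ} (σ : ℝ) (hσ : 0 < σ) (ν : EuclideanSpace ℝ (Fin d)) :
    ∫ x, gDens d ν (σ^2) x = 1 := by
  have hV : (⟨σ^2, sq_nonneg σ⟩ : NNReal) ≠ 0 := fun h =>
    (pow_pos hσ 2).ne' (congrArg NNReal.toReal h)
  set b : OrthonormalBasis (Fin d) ℝ (EuclideanSpace ℝ (Fin d)) :=
    EuclideanSpace.basisFun (Fin d) ℝ
  set e := (MeasurableEquiv.toLp 2 (Fin d → ℝ)).symm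
  set φ := b.measurableEquiv.trans e with hφdef
  have hφ : MeasurePreserving φ volume volume :=
    (EuclideanSpace.volume_preserving_symm_measurableEquiv_toLp (Fin d)).comp
      b.measurePreserving_measurableEquiv
  rw [← (hφ.symm φ).integral_comp']
  rw [show (fun y => gDens d ν (σ^2) (φ.symm y))
      = fun y => ∏ i, gaussianPDFReal ((b.repr ν) i) ⟨σ^2, sq_nonneg σ⟩ (y i)
    from funext fun y => gDens_comp_symm σ hσ ν b y]
  rw [integral_fintype_prod_volume_eq_prod (ι := Fin d)
    (fun i => gaussianPDFReal ((b.repr ν) i) ⟨σ^2, sq_nonneg σ⟩)]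
  exact Finset.prod_eq_one fun i _ => integral_gaussianPDFReal_eq_one _ hV

lemma gaussianE_apply {d : ℕ} (σ : ℝ) (hσ : 0 < σ) (ν : EuclideanSpace ℝ (Fin d)) (A) :
    gaussianE d ν (σ^2) A = ENNReal.ofReal (∫ x in A, gDens d ν (σ^2) x) := by
  have hDme : Measurable fun x : EuclideanSpace ℝ (Fin d) => ENNReal.ofReal (gDens d ν (σ^2) x) := by
    unfold gDens; fun_prop
  rw [gaussianE_eq_withDensity, withDensity_apply' _ A,
    ← ofReal_integral_eq_lintegral_ofReal (gDens_integrable σ hσ ν).restrict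
      (ae_of_all _ (gDens_nonneg (by positivity)))]

lemma gaussianE_apply_toReal {d : ℕ} (σ : ℝ) (hσ : 0 < σ) (ν : EuclideanSpace ℝ (Fin d)) (A) :
    (gaussianE d ν (σ^2) A).toReal = ∫ x in A, gDens d ν (σ^2) x := by
  rw [gaussianE_apply σ hσ ν A, ENNReal.toReal_ofReal
    (integral_nonneg (gDens_nonneg (by positivity)))]

lemma gaussianE_inner_apply {d : ℕ} (hd : 0 < d) (σ : ℝ) (hσ : 0 < σ)
    (v ν : EuclideanSpace ℝ (Fin d)) (hv : ‖v‖ = 1) {S : Set ℝ} (hS : MeasurableSet S) :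
    gaussianE d ν (σ^2) {x | (inner ℝ v x : ℝ) ∈ S}
      = gaussianReal (inner ℝ v ν : ℝ) ⟨σ^2, sq_nonneg σ⟩ S := by
  haveI : NeZero d := ⟨hd.ne'⟩
  set V : NNReal := ⟨σ^2, sq_nonneg σ⟩ with hVdef
  have hV : V ≠ 0 := fun h => (pow_pos hσ 2).ne' (congrArg NNReal.toReal h)
  have hon : Orthonormal ℝ (({0} : Set (Fin d)).restrict (fun _ : Fin d => v)) := by
    constructor
    · intro i; exact hv
    · intro i j hij
      exact absurd (Subtype.ext ((Set.mem_singleton_iff.mp i.2).trans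
        (Set.mem_singleton_iff.mp j.2).symm)) hij
  obtain ⟨b, hb⟩ := hon.exists_orthonormalBasis_extension_of_card_eq
    (by simp [finrank_euclideanSpace])
  have hb0 : b 0 = v := hb 0 rfl
  set e := (MeasurableEquiv.toLp 2 (Fin d → ℝ)).symm with he
  set φ := b.measurableEquiv.trans e with hφdef
  have hφ : MeasurePreserving φ volume volume :=
    (EuclideanSpace.volume_preserving_symm_measurableEquiv_toLp (Fin d)).comp
      b.measurePreserving_measurableEquiv
  set A : Set (EuclideanSpace ℝ (Fin d)) := {x | (inner ℝ v x : ℝ) ∈ S} with hA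
  have hAme : MeasurableSet A := by
    have : Continuous fun x : EuclideanSpace ℝ (Fin d) => (inner ℝ v x : ℝ) :=
      Continuous.inner continuous_const continuous_id
    exact hS.preimage this.measurable
  have hval : ∀ y : Fin d → ℝ,
      gDens d ν (σ^2) (φ.symm y) = ∏ i, gaussianPDFReal ((b.repr ν) i) V (y i) :=
    fun y => gDens_comp_symm σ hσ ν b y
  have hcoord : ∀ (y : Fin d → ℝ) (i : Fin d), (e.symm y : EuclideanSpace ℝ (Fin d)) i = y i :=
    fun y i => rfl
  have hmem : ∀ y : Fin d → ℝ, (φ.symm y ∈ A ↔ y 0 ∈ S) := by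
    intro y
    have : (inner ℝ v (φ.symm y) : ℝ) = y 0 := by
      rw [← hb0, ← OrthonormalBasis.repr_apply_apply]
      have : b.repr (φ.symm y) = e.symm y := b.repr.apply_symm_apply _
      rw [this]
      exact hcoord y 0
    simp only [hA, Set.mem_setOf_eq, this]
  set Sf : Fin d → Set ℝ := fun i => if i = 0 then S else univ with hSf
  have hptwise : ∀ y : Fin d → ℝ,
      A.indicator (gDens d ν (σ^2)) (φ.symm y)
        = ∏ i, (Sf i).indicator (gaussianPDFReal ((b.repr ν) i) V) (y i) := by
    intro y
    by_cases h : y 0 ∈ S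
    · rw [Set.indicator_of_mem ((hmem y).mpr h), hval y]
      refine Finset.prod_congr rfl fun i _ => ?_
      by_cases hi : i = 0
      · subst hi; simp [hSf, Set.indicator_of_mem h]
      · simp [hSf, hi]
    · rw [Set.indicator_of_notMem (fun hc => h ((hmem y).mp hc))]
      symm
      apply Finset.prod_eq_zero (Finset.mem_univ (0 : Fin d))
      simp [hSf, Set.indicator_of_notMem h]
  rw [gaussianE_apply σ hσ ν A, gaussianReal_apply_eq_integral _ hV S]
  congr 1
  rw [← integral_indicator hAme, ← (hφ.symm φ).integral_comp']
  rw [show (fun y => A.indicator (gDens d ν (σ^2)) (φ.symm y))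
      = fun y => ∏ i, (Sf i).indicator (gaussianPDFReal ((b.repr ν) i) V) (y i)
    from funext hptwise]
  rw [integral_fintype_prod_volume_eq_prod (ι := Fin d)
    (fun i => (Sf i).indicator (gaussianPDFReal ((b.repr ν) i) V))]
  rw [Fintype.prod_eq_single (0 : Fin d) (fun i hi => by
    simp only [hSf, if_neg hi, Set.indicator_univ]
    exact integral_gaussianPDFReal_eq_one _ hV)]
  rw [show Sf 0 = S from if_pos rfl, integral_indicator hS]
  congr 2
  rw [OrthonormalBasis.repr_apply_apply, hb0]

end Aux

open ProbabilityTheory Real Set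

/-- total variation distance between two Gaussian measures on `ℝ^d`
with the same covariance `σ² Id`. -/
theorem stmt4 {d : ℕ} (μ₁ μ₂ : EuclideanSpace ℝ (Fin d)) (σ : ℝ) (hσ : 0 < σ) :
    tvDist (gaussianE d μ₁ (σ ^ 2)) (gaussianE d μ₂ (σ ^ 2))
      = 1 - 2 * stdGaussianCDF (-‖μ₁ - μ₂‖ / (2 * σ)) := by
  haveI : Nonempty {A : Set (EuclideanSpace ℝ (Fin d)) // MeasurableSet A} :=
    ⟨⟨∅, MeasurableSet.empty⟩⟩
  by_cases heq : μ₁ = μ₂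
  · subst heq
    rw [sub_self, norm_zero, neg_zero, zero_div, stdGaussianCDF_zero, tvDist]
    simp only [sub_self, abs_zero]
    rw [ciSup_const]
    norm_num
  · -- main case
    have hd : 0 < d := by
      rcases Nat.eq_zero_or_pos d with h | h
      · subst h
        exact absurd (show μ₁ = μ₂ by ext i; exact i.elim0) heq
      · exact h
    set u : EuclideanSpace ℝ (Fin d) := μ₁ - μ₂ with hu
    have hune : u ≠ 0 := sub_ne_zero.mpr heq
    set m : ℝ := ‖u‖ with hmdef
    have hm : 0 < m := norm_pos_iff.mpr hune
    set v : EuclideanSpace ℝ (Fin d) := m⁻¹ • u with hvdef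
    have hv : ‖v‖ = 1 := by
      rw [hvdef, norm_smul, norm_inv, Real.norm_eq_abs, abs_of_pos hm, ← hmdef,
        inv_mul_cancel₀ hm.ne']
    set t : ℝ := (‖μ₁‖^2 - ‖μ₂‖^2) / (2*m) with htdef
    set H : Set (EuclideanSpace ℝ (Fin d)) := {x | (inner ℝ v x : ℝ) ∈ Ici t} with hH
    have hHme : MeasurableSet H := by
      have : Continuous fun x : EuclideanSpace ℝ (Fin d) => (inner ℝ v x : ℝ) :=
        Continuous.inner continuous_const continuous_id
      exact measurableSet_Ici.preimage this.measurable
    set I : ℝ := (inner ℝ μ₁ μ₂ : ℝ) with hIdef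
    have hmsq : m^2 = ‖μ₁‖^2 - 2 * I + ‖μ₂‖^2 := by
      rw [hmdef, hu, hIdef]; exact norm_sub_sq_real μ₁ μ₂
    have hinner1 : (inner ℝ v μ₁ : ℝ) = m⁻¹ * (‖μ₁‖^2 - I) := by
      rw [hvdef, real_inner_smul_left, hu, inner_sub_left, real_inner_self_eq_norm_sq,
        hIdef, real_inner_comm]
    have hinner2 : (inner ℝ v μ₂ : ℝ) = m⁻¹ * (I - ‖μ₂‖^2) := by
      rw [hvdef, real_inner_smul_left, hu, inner_sub_left, real_inner_self_eq_norm_sq, hIdef]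
    have hta1 : t - (inner ℝ v μ₁ : ℝ) = -m/2 := by
      rw [hinner1, htdef]
      field_simp
      nlinarith [hmsq]
    have hta2 : t - (inner ℝ v μ₂ : ℝ) = m/2 := by
      rw [hinner2, htdef]
      field_simp
      nlinarith [hmsq]
    have ha1 : (t - (inner ℝ v μ₁ : ℝ)) / σ = -m/(2*σ) := by
      rw [hta1]; ring
    have ha2 : (t - (inner ℝ v μ₂ : ℝ)) / σ = m/(2*σ) := by
      rw [hta2]; ring
    have h1 : gaussianE d μ₁ (σ^2) H = gaussianReal 0 1 (Ici (-m/(2*σ))) := by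
      rw [hH, gaussianE_inner_apply hd σ hσ v μ₁ hv measurableSet_Ici,
        gaussianReal_Ici_eq σ hσ, ha1]
    have h2 : gaussianE d μ₂ (σ^2) H = gaussianReal 0 1 (Iic (-m/(2*σ))) := by
      rw [hH, gaussianE_inner_apply hd σ hσ v μ₂ hv measurableSet_Ici,
        gaussianReal_Ici_eq σ hσ, ha2, stdGaussian_Ici_symm, neg_div]
    set p : ℝ := stdGaussianCDF (-m/(2*σ)) with hpdef
    have h1R : (gaussianE d μ₁ (σ^2) H).toReal = 1 - p := by
      rw [h1, stdGaussian_Ici]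
    have h2R : (gaussianE d μ₂ (σ^2) H).toReal = p := by
      rw [h2]; rfl
    -- density comparison
    set g₁ := gDens d μ₁ (σ^2) with hg1
    set g₂ := gDens d μ₂ (σ^2) with hg2
    have hcmp : ∀ x, x ∈ H ↔ g₂ x ≤ g₁ x := by
      intro x
      have hC : (0:ℝ) < (2 * Real.pi * σ^2) ^ (-(d:ℝ)/2) :=
        Real.rpow_pos_of_pos (by positivity) _
      have hiff : g₂ x ≤ g₁ x ↔ ‖x - μ₁‖^2 ≤ ‖x - μ₂‖^2 := by
        rw [hg1, hg2, gDens, gDens, mul_le_mul_iff_right₀ hC, Real.exp_le_exp,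
          div_le_div_iff_of_pos_right (by positivity), neg_le_neg_iff]
      have hexp1 : ‖x - μ₁‖^2 = ‖x‖^2 - 2 * (inner ℝ x μ₁ : ℝ) + ‖μ₁‖^2 := norm_sub_sq_real x μ₁
      have hexp2 : ‖x - μ₂‖^2 = ‖x‖^2 - 2 * (inner ℝ x μ₂ : ℝ) + ‖μ₂‖^2 := norm_sub_sq_real x μ₂
      set I1 : ℝ := (inner ℝ x μ₁ : ℝ) with hI1
      set I2 : ℝ := (inner ℝ x μ₂ : ℝ) with hI2
      have hvx : (inner ℝ v x : ℝ) = m⁻¹ * (I1 - I2) := by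
        rw [hvdef, real_inner_smul_left, hu, inner_sub_left, hI1, hI2,
          real_inner_comm x μ₁, real_inner_comm x μ₂]
      rw [hiff, hexp1, hexp2, hH]
      simp only [Set.mem_setOf_eq, Set.mem_Ici]
      rw [hvx, htdef, div_le_iff₀ (by positivity : (0:ℝ) < 2*m)]
      have hmm : m⁻¹ * (I1 - I2) * (2*m) = 2*(I1 - I2) := by
        field_simp
      rw [hmm]
      constructor <;> intro hle <;> linarith
    have hint1 : Integrable g₁ := gDens_integrable σ hσ μ₁
    have hint2 : Integrable g₂ := gDens_integrable σ hσ μ₂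
    set h : EuclideanSpace ℝ (Fin d) → ℝ := fun x => g₁ x - g₂ x with hhdef
    have hInt : Integrable h := hint1.sub hint2
    have htot : ∫ x, h x = 0 := by
      rw [hhdef]
      rw [integral_sub hint1 hint2, hg1, hg2, integral_gDens σ hσ μ₁, integral_gDens σ hσ μ₂,
        sub_self]
    have hHkey : ∀ A : Set (EuclideanSpace ℝ (Fin d)), MeasurableSet A →
        ∫ x in A, h x ≤ ∫ x in H, h x := by
      intro A hA
      have hsplit : (∫ x in A ∩ H, h x) + ∫ x in A \ H, h x = ∫ x in A, h x :=
        integral_inter_add_diff (s := A) hHme hInt.integrableOn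
      have hneg : ∫ x in A \ H, h x ≤ 0 := by
        refine setIntegral_nonpos (hA.diff hHme) fun x hx => ?_
        have : ¬ (g₂ x ≤ g₁ x) := fun hc => hx.2 ((hcmp x).mpr hc)
        rw [hhdef]
        simp only
        linarith [lt_of_not_ge this]
      have hmono : ∫ x in A ∩ H, h x ≤ ∫ x in H, h x := by
        refine setIntegral_mono_set hInt.integrableOn ?_ ?_
        · refine (ae_restrict_iff' hHme).mpr (ae_of_all _ fun x hx => ?_)
          have := (hcmp x).mp hx
          simp only [hhdef, Pi.zero_apply]; linarith
        · exact HasSubset.Subset.eventuallyLE Set.inter_subset_right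
      linarith
    have hsetint : ∀ A : Set (EuclideanSpace ℝ (Fin d)), MeasurableSet A →
        (gaussianE d μ₁ (σ^2) A).toReal - (gaussianE d μ₂ (σ^2) A).toReal = ∫ x in A, h x := by
      intro A hA
      rw [gaussianE_apply_toReal σ hσ μ₁ A, gaussianE_apply_toReal σ hσ μ₂ A, hhdef,
        integral_sub hint1.integrableOn hint2.integrableOn]
    have hVval : ∫ x in H, h x = 1 - 2*p := by
      rw [← hsetint H hHme, h1R, h2R]; ring
    have hbound : ∀ A : Set (EuclideanSpace ℝ (Fin d)), MeasurableSet A →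
        |(gaussianE d μ₁ (σ^2) A).toReal - (gaussianE d μ₂ (σ^2) A).toReal| ≤ 1 - 2*p := by
      intro A hA
      rw [hsetint A hA, ← hVval]
      rw [abs_le]
      constructor
      · have hcompl := hHkey Aᶜ hA.compl
        have hadd : (∫ x in A, h x) + ∫ x in Aᶜ, h x = ∫ x, h x :=
          integral_add_compl hA hInt
        linarith [htot ▸ hadd]
      · exact hHkey A hA
    have hnonnegV : 0 ≤ ∫ x in H, h x := by
      refine setIntegral_nonneg hHme fun x hx => ?_
      have := (hcmp x).mp hx
      rw [hhdef]; simp only; linarith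
    -- conclude
    rw [tvDist]
    have habs : |(gaussianE d μ₁ (σ^2) H).toReal - (gaussianE d μ₂ (σ^2) H).toReal|
        = 1 - 2*p := by
      rw [hsetint H hHme, hVval, abs_of_nonneg (hVval ▸ hnonnegV)]
    apply le_antisymm
    · exact ciSup_le fun A => hbound A.1 A.2
    · calc (1 : ℝ) - 2*p = _ := habs.symm
        _ ≤ _ := le_ciSup ⟨1 - 2*p, by rintro x ⟨A, rfl⟩; exact hbound A.1 A.2⟩
            (⟨H, hHme⟩ : {A : Set (EuclideanSpace ℝ (Fin d)) // MeasurableSet A})
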